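/- There exists a finite connected graph G together with a partition of its vertex set that is an equitable partition of G but is not a status partition of G; that is, for every pair of parts P, Q, all vertices of P have the same number of neighbors in Q, yet some part contains two vertices with different statuses. -/

import Mathlib

/-- The status (transmission index) of a vertex: the sum of distances to all vertices. -/
noncomputable def SimpleGraph.status {V : Type*} [Fintype V] (G : SimpleGraph V) (v : V) : ℕ :=
  ∑ u : V, G.dist v u

namespace EqPartAux

def adjB (a b : Fin 8) : Bool :=
  decide ((a.val, b.val) ∈ [(0,6),(1,2),(0,1),(4,7),(1,6),(3,4),(0,5),(3,7),(2,3),(4,5),(0,3)]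
    ∨ (b.val, a.val) ∈ [(0,6),(1,2),(0,1),(4,7),(1,6),(3,4),(0,5),(3,7),(2,3),(4,5),(0,3)])

lemma symAux : ∀ a b : Fin 8, adjB a b = true → adjB b a = true := by decide
lemma looplessAux : ∀ a : Fin 8, ¬ adjB a a = true := by decide

def G : SimpleGraph (Fin 8) where
  Adj a b := adjB a b = true
  symm := ⟨fun a b h => symAux a b h⟩
  loopless := ⟨fun a h => looplessAux a h⟩

instance : DecidableRel G.Adj := fun a b => inferInstanceAs (Decidable (adjB a b = true))

-- walks to vertex 0 for connectivity
def wk (u v : Fin 8) (h : G.Adj u v) : G.Walk u v := SimpleGraph.Walk.cons h SimpleGraph.Walk.nil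

lemma reach0 (v : Fin 8) : G.Reachable v 0 := by
  fin_cases v
  · exact SimpleGraph.Reachable.refl 0
  · exact (wk 1 0 (by decide)).reachable
  · exact ((wk 2 1 (by decide)).append (wk 1 0 (by decide))).reachable
  · exact (wk 3 0 (by decide)).reachable
  · exact ((wk 4 3 (by decide)).append (wk 3 0 (by decide))).reachable
  · exact (wk 5 0 (by decide)).reachable
  · exact (wk 6 0 (by decide)).reachable
  · exact ((wk 7 3 (by decide)).append (wk 3 0 (by decide))).reachable

lemma Gconn : G.Connected := by
  rw [SimpleGraph.connected_iff]
  exact ⟨fun u v => (reach0 u).trans (reach0 v).symm, ⟨0⟩⟩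

lemma walk_lb (s : Fin 8) (f : Fin 8 → ℕ) (h0 : f s = 0)
    (hstep : ∀ x y : Fin 8, G.Adj x y → f x ≤ f y + 1) :
    ∀ {v : Fin 8} (p : G.Walk v s), f v ≤ p.length := by
  intro v p
  induction p with
  | nil => simp [h0]
  | cons h q ih =>
      rw [SimpleGraph.Walk.length_cons]
      exact le_trans (hstep _ _ h) (by omega)

lemma dist_ge (s v : Fin 8) (f : Fin 8 → ℕ) (h0 : f s = 0)
    (hstep : ∀ x y : Fin 8, G.Adj x y → f x ≤ f y + 1) :
    f v ≤ G.dist s v := by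
  obtain ⟨p, hp⟩ := ((reach0 v).trans (reach0 s).symm).exists_walk_length_eq_dist
  rw [SimpleGraph.dist_comm, ← hp]
  exact walk_lb s f h0 hstep p

def f2 : Fin 8 → ℕ := ![2,1,0,1,2,3,2,2]
def f6 : Fin 8 → ℕ := ![1,1,2,2,3,2,0,3]

lemma dist_eq (s v : Fin 8) (f : Fin 8 → ℕ) (h0 : f s = 0)
    (hstep : ∀ x y : Fin 8, G.Adj x y → f x ≤ f y + 1)
    (k : ℕ) (p : G.Walk s v) (hl : p.length = k) (hf : f v = k) : G.dist s v = k :=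
  le_antisymm (hl ▸ SimpleGraph.dist_le p) (hf ▸ dist_ge s v f h0 hstep)

lemma f2step : ∀ x y : Fin 8, G.Adj x y → f2 x ≤ f2 y + 1 := by decide
lemma f6step : ∀ x y : Fin 8, G.Adj x y → f6 x ≤ f6 y + 1 := by decide

lemma status2 : G.status 2 = 13 := by
  have d0 : G.dist 2 0 = 2 := dist_eq 2 0 f2 rfl f2step 2
    ((wk 2 1 (by decide)).append (wk 1 0 (by decide))) (by rfl) (by decide)
  have d1 : G.dist 2 1 = 1 := dist_eq 2 1 f2 rfl f2step 1 (wk 2 1 (by decide)) (by rfl) (by decide)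
  have d2 : G.dist 2 2 = 0 := dist_eq 2 2 f2 rfl f2step 0 SimpleGraph.Walk.nil (by rfl) (by decide)
  have d3 : G.dist 2 3 = 1 := dist_eq 2 3 f2 rfl f2step 1 (wk 2 3 (by decide)) (by rfl) (by decide)
  have d4 : G.dist 2 4 = 2 := dist_eq 2 4 f2 rfl f2step 2
    ((wk 2 3 (by decide)).append (wk 3 4 (by decide))) (by rfl) (by decide)
  have d5 : G.dist 2 5 = 3 := dist_eq 2 5 f2 rfl f2step 3
    (((wk 2 1 (by decide)).append (wk 1 0 (by decide))).append (wk 0 5 (by decide))) (by rfl) (by decide)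
  have d6 : G.dist 2 6 = 2 := dist_eq 2 6 f2 rfl f2step 2
    ((wk 2 1 (by decide)).append (wk 1 6 (by decide))) (by rfl) (by decide)
  have d7 : G.dist 2 7 = 2 := dist_eq 2 7 f2 rfl f2step 2
    ((wk 2 3 (by decide)).append (wk 3 7 (by decide))) (by rfl) (by decide)
  rw [SimpleGraph.status, Fin.sum_univ_eight, d0, d1, d2, d3, d4, d5, d6, d7]

lemma status6 : G.status 6 = 14 := by
  have d0 : G.dist 6 0 = 1 := dist_eq 6 0 f6 rfl f6step 1 (wk 6 0 (by decide)) (by rfl) (by decide)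
  have d1 : G.dist 6 1 = 1 := dist_eq 6 1 f6 rfl f6step 1 (wk 6 1 (by decide)) (by rfl) (by decide)
  have d2 : G.dist 6 2 = 2 := dist_eq 6 2 f6 rfl f6step 2
    ((wk 6 1 (by decide)).append (wk 1 2 (by decide))) (by rfl) (by decide)
  have d3 : G.dist 6 3 = 2 := dist_eq 6 3 f6 rfl f6step 2
    ((wk 6 0 (by decide)).append (wk 0 3 (by decide))) (by rfl) (by decide)
  have d4 : G.dist 6 4 = 3 := dist_eq 6 4 f6 rfl f6step 3
    (((wk 6 0 (by decide)).append (wk 0 3 (by decide))).append (wk 3 4 (by decide))) (by rfl) (by decide)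
  have d5 : G.dist 6 5 = 2 := dist_eq 6 5 f6 rfl f6step 2
    ((wk 6 0 (by decide)).append (wk 0 5 (by decide))) (by rfl) (by decide)
  have d6 : G.dist 6 6 = 0 := dist_eq 6 6 f6 rfl f6step 0 SimpleGraph.Walk.nil (by rfl) (by decide)
  have d7 : G.dist 6 7 = 3 := dist_eq 6 7 f6 rfl f6step 3
    (((wk 6 0 (by decide)).append (wk 0 3 (by decide))).append (wk 3 7 (by decide))) (by rfl) (by decide)
  rw [SimpleGraph.status, Fin.sum_univ_eight, d0, d1, d2, d3, d4, d5, d6, d7]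

def P0 : Set (Fin 8) := {x | x = 0 ∨ x = 3}
def P1 : Set (Fin 8) := {x | x = 1 ∨ x = 4}
def P2 : Set (Fin 8) := {x | x = 2 ∨ x = 5 ∨ x = 6 ∨ x = 7}

instance : DecidablePred (· ∈ P0) := fun x => inferInstanceAs (Decidable (x = 0 ∨ x = 3))
instance : DecidablePred (· ∈ P1) := fun x => inferInstanceAs (Decidable (x = 1 ∨ x = 4))
instance : DecidablePred (· ∈ P2) := fun x => inferInstanceAs (Decidable (x = 2 ∨ x = 5 ∨ x = 6 ∨ x = 7))

lemma ncard_filter (p : Fin 8 → Prop) [DecidablePred p] :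
    {w | p w}.ncard = (Finset.univ.filter p).card := by
  rw [← Set.ncard_coe_finset]
  congr 1
  ext w
  simp

end EqPartAux

open EqPartAux in
theorem exists_equitable_partition_not_status_partition :
    ∃ (n : ℕ) (G : SimpleGraph (Fin n)) (Part : Set (Set (Fin n))),
      G.Connected ∧ Setoid.IsPartition Part ∧
      (∀ P ∈ Part, ∀ Q ∈ Part, ∀ u ∈ P, ∀ v ∈ P,
        {w : Fin n | w ∈ Q ∧ G.Adj u w}.ncard = {w : Fin n | w ∈ Q ∧ G.Adj v w}.ncard) ∧
      (∃ P ∈ Part, ∃ u ∈ P, ∃ v ∈ P, G.status u ≠ G.status v) := by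
  refine ⟨8, G, {P0, P1, P2}, Gconn, ?_, ?_, ?_⟩
  · constructor
    · intro h
      simp only [Set.mem_insert_iff, Set.mem_singleton_iff] at h
      rcases h with h | h | h
      · exact absurd (h ▸ (show (0 : Fin 8) ∈ P0 from Or.inl rfl)) (Set.notMem_empty 0)
      · exact absurd (h ▸ (show (1 : Fin 8) ∈ P1 from Or.inl rfl)) (Set.notMem_empty 1)
      · exact absurd (h ▸ (show (2 : Fin 8) ∈ P2 from Or.inl rfl)) (Set.notMem_empty 2)
    · intro a
      have huniq : ∀ b ∈ ({P0, P1, P2} : Set (Set (Fin 8))), ∀ P ∈ ({P0, P1, P2} : Set (Set (Fin 8))),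
          a ∈ b → a ∈ P → P = b := by
        intro b hb P hP hab haP
        simp only [Set.mem_insert_iff, Set.mem_singleton_iff] at hb hP
        fin_cases a <;>
          (rcases hb with rfl | rfl | rfl <;> rcases hP with rfl | rfl | rfl <;>
            first | rfl | (exfalso; revert hab haP; decide))
      fin_cases a
      · exact ⟨P0, ⟨Or.inl rfl, by decide⟩, fun y ⟨hy, hay⟩ => huniq P0 (Or.inl rfl) y hy (by decide) hay⟩
      · exact ⟨P1, ⟨Or.inr (Or.inl rfl), by decide⟩, fun y ⟨hy, hay⟩ => huniq P1 (Or.inr (Or.inl rfl)) y hy (by decide) hay⟩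
      · exact ⟨P2, ⟨Or.inr (Or.inr rfl), by decide⟩, fun y ⟨hy, hay⟩ => huniq P2 (Or.inr (Or.inr rfl)) y hy (by decide) hay⟩
      · exact ⟨P0, ⟨Or.inl rfl, by decide⟩, fun y ⟨hy, hay⟩ => huniq P0 (Or.inl rfl) y hy (by decide) hay⟩
      · exact ⟨P1, ⟨Or.inr (Or.inl rfl), by decide⟩, fun y ⟨hy, hay⟩ => huniq P1 (Or.inr (Or.inl rfl)) y hy (by decide) hay⟩
      · exact ⟨P2, ⟨Or.inr (Or.inr rfl), by decide⟩, fun y ⟨hy, hay⟩ => huniq P2 (Or.inr (Or.inr rfl)) y hy (by decide) hay⟩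
      · exact ⟨P2, ⟨Or.inr (Or.inr rfl), by decide⟩, fun y ⟨hy, hay⟩ => huniq P2 (Or.inr (Or.inr rfl)) y hy (by decide) hay⟩
      · exact ⟨P2, ⟨Or.inr (Or.inr rfl), by decide⟩, fun y ⟨hy, hay⟩ => huniq P2 (Or.inr (Or.inr rfl)) y hy (by decide) hay⟩
  · intro P hP Q hQ u hu v hv
    simp only [Set.mem_insert_iff, Set.mem_singleton_iff] at hP hQ
    rcases hP with rfl | rfl | rfl <;> rcases hQ with rfl | rfl | rfl <;>
      rw [ncard_filter, ncard_filter] <;>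
      (revert hu hv; revert u v; decide)
  · exact ⟨P2, Or.inr (Or.inr rfl), 2, Or.inl rfl, 6, Or.inr (Or.inr (Or.inl rfl)),
      by rw [status2, status6]; omega⟩
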